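/- Let A be a unital complex C*-algebra and N : A → [0,∞] a function such that: N is a norm on D = {x : N(x) < ∞} (subadditive, N(λx) = |λ|N(x), N(x) = 0 ⟹ x = 0), N(x*) = N(x) for all x, there is R > 0 with ‖x‖ ≤ R·N(x) for all x ∈ A, and for each r ≥ 0 the set {x : N(x) ≤ r} is norm-closed in A. Define ε(r) = sup_{N(x) ≤ 1} inf_{N(y) ≤ r} ‖y − x*x‖. Then the following are equivalent: (i) there exists a constant C > 0 such that N(ab) ≤ C·N(a)·N(b) for all a, b ∈ A; (ii) ε(r₀) = 0 for some r₀ ≥ 0. -/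

import Mathlib

open scoped ENNReal NNReal

private theorem polar4 {A : Type*} [Ring A] [StarRing A] [Algebra ℂ A] [StarModule ℂ A]
    (u v : A) :
    (4:ℂ) • (star v * u) =
      (star (u + v) * (u + v))
      + Complex.I • (star (u + Complex.I • v) * (u + Complex.I • v))
      - (star (u - v) * (u - v))
      - Complex.I • (star (u - Complex.I • v) * (u - Complex.I • v)) := by
  simp only [star_add, star_sub, star_smul, mul_add, add_mul, sub_mul, mul_sub,
    smul_mul_assoc, mul_smul_comm, smul_smul, smul_add, smul_sub,
    Complex.star_def, Complex.conj_I]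
  match_scalars <;> simp [Complex.I_sq] <;> ring

theorem stmt17 {A : Type*} [NormedRing A] [StarRing A] [CStarRing A] [NormedAlgebra ℂ A]
    [CompleteSpace A] [StarModule ℂ A]
    (N : A → ℝ≥0∞)
    (hadd : ∀ x y : A, N (x + y) ≤ N x + N y)
    (hsmul : ∀ (c : ℂ) (x : A), N (c • x) = (‖c‖₊ : ℝ≥0∞) * N x)
    (hdef : ∀ x : A, N x = 0 → x = 0)
    (hstar : ∀ x : A, N (star x) = N x)
    (hR : ∃ R : ℝ≥0, 0 < R ∧ ∀ x : A, (‖x‖₊ : ℝ≥0∞) ≤ (R : ℝ≥0∞) * N x)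
    (hclosed : ∀ r : ℝ≥0, IsClosed {x : A | N x ≤ (r : ℝ≥0∞)}) :
    (∃ C : ℝ≥0, 0 < C ∧ ∀ a b : A, N (a * b) ≤ (C : ℝ≥0∞) * N a * N b) ↔
      (∃ r₀ : ℝ≥0, (⨆ x : {x : A // N x ≤ 1},
        ⨅ y : {y : A // N y ≤ (r₀ : ℝ≥0∞)}, (‖y.1 - star x.1 * x.1‖₊ : ℝ≥0∞)) = 0) := by
  have hN0 : N 0 = 0 := by
    have h := hsmul 0 0
    simpa using h
  have hNneg : ∀ x : A, N (-x) = N x := by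
    intro x
    have h := hsmul (-1) x
    simpa using h
  constructor
  · rintro ⟨C, hC, hCmul⟩
    refine ⟨C, ENNReal.iSup_eq_zero.mpr ?_⟩
    rintro ⟨x, hx⟩
    have hy : N (star x * x) ≤ (C : ℝ≥0∞) := by
      calc N (star x * x) ≤ (C : ℝ≥0∞) * N (star x) * N x := hCmul _ _
        _ = (C : ℝ≥0∞) * N x * N x := by rw [hstar]
        _ ≤ (C : ℝ≥0∞) * 1 * 1 := by gcongr
        _ = C := by simp
    refine le_antisymm (iInf_le_of_le ⟨star x * x, hy⟩ ?_) zero_le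
    simp
  · rintro ⟨r₀, hr⟩
    -- Step 1: if N x ≤ 1 then N (x* x) ≤ r₀.
    have key1 : ∀ x : A, N x ≤ 1 → N (star x * x) ≤ (r₀ : ℝ≥0∞) := by
      intro x hx
      have h0 : (⨅ y : {y : A // N y ≤ (r₀ : ℝ≥0∞)},
          (‖y.1 - star x * x‖₊ : ℝ≥0∞)) = 0 := ENNReal.iSup_eq_zero.mp hr ⟨x, hx⟩
      have hmem : star x * x ∈ closure {y : A | N y ≤ (r₀ : ℝ≥0∞)} := by
        rw [EMetric.mem_closure_iff]
        intro δ hδ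
        have hlt : (⨅ y : {y : A // N y ≤ (r₀ : ℝ≥0∞)},
            (‖y.1 - star x * x‖₊ : ℝ≥0∞)) < δ := by rw [h0]; exact hδ
        obtain ⟨⟨y, hy⟩, hylt⟩ := iInf_lt_iff.mp hlt
        refine ⟨y, hy, ?_⟩
        rw [edist_nndist, nndist_eq_nnnorm_sub,
          show star x * x - y = -(y - star x * x) from (neg_sub _ _).symm, nnnorm_neg]
        exact hylt
      have := (hclosed r₀).closure_eq ▸ hmem
      exact this
    -- Step 2: scaling.
    have key2 : ∀ (w : A) (t : ℝ≥0), 0 < t → N w ≤ t →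
        N (star w * w) ≤ (t : ℝ≥0∞) * t * r₀ := by
      intro w t ht hw
      have htne : (t : ℝ≥0∞) ≠ 0 := by exact_mod_cast ht.ne'
      have httop : (t : ℝ≥0∞) ≠ ⊤ := ENNReal.coe_ne_top
      set c : ℂ := (((t:ℝ) : ℂ))⁻¹ with hc
      have hcn : (‖c‖₊ : ℝ≥0∞) = (t : ℝ≥0∞)⁻¹ := by
        rw [hc]; push_cast [nnnorm_inv]
        simp [ENNReal.coe_inv ht.ne']
      have hcw : N (c • w) ≤ 1 := by
        rw [hsmul, hcn]
        calc (t : ℝ≥0∞)⁻¹ * N w ≤ (t : ℝ≥0∞)⁻¹ * t := by gcongr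
          _ = 1 := ENNReal.inv_mul_cancel htne httop
      have hk := key1 (c • w) hcw
      have hexp : star (c • w) * (c • w) = (c * c) • (star w * w) := by
        rw [star_smul, smul_mul_smul_comm]
        congr 1
        rw [hc, Complex.star_def]
        push_cast
        rw [Complex.conj_inv, Complex.conj_ofReal]
      rw [hexp, hsmul, nnnorm_mul, ENNReal.coe_mul, hcn] at hk
      have hone : ((t:ℝ≥0∞) * t) * ((t:ℝ≥0∞)⁻¹ * (t:ℝ≥0∞)⁻¹) = 1 := by
        rw [mul_mul_mul_comm, ENNReal.mul_inv_cancel htne httop, one_mul]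
      calc N (star w * w)
          = ((t : ℝ≥0∞) * t) * (((t:ℝ≥0∞)⁻¹ * (t:ℝ≥0∞)⁻¹) * N (star w * w)) := by
            rw [← mul_assoc, hone, one_mul]
        _ ≤ ((t : ℝ≥0∞) * t) * r₀ := by gcongr
        _ = (t : ℝ≥0∞) * t * r₀ := rfl
    -- Step 3: products of unit-ball elements.
    have key3 : ∀ a b : A, N a ≤ 1 → N b ≤ 1 → N (a * b) ≤ 4 * r₀ := by
      intro a b ha hb
      have hsa : N (star a) ≤ 1 := by rw [hstar]; exact ha
      have hW : ∀ c : ℂ, ‖c‖₊ = 1 →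
          N (star (b + c • star a) * (b + c • star a)) ≤ 4 * r₀ := by
        intro c hcn
        have hN2 : N (b + c • star a) ≤ ((2 : ℝ≥0) : ℝ≥0∞) := by
          calc N (b + c • star a) ≤ N b + N (c • star a) := hadd _ _
            _ = N b + N (star a) := by rw [hsmul, hcn]; simp
            _ ≤ 1 + 1 := add_le_add hb hsa
            _ = ((2 : ℝ≥0) : ℝ≥0∞) := by norm_num
        calc N (star (b + c • star a) * (b + c • star a)) ≤ ((2:ℝ≥0) : ℝ≥0∞) * 2 * r₀ :=
              key2 _ 2 (by norm_num) hN2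
          _ = 4 * r₀ := by norm_num
      have hW1 : N (star (b + star a) * (b + star a)) ≤ 4 * r₀ := by
        have h := hW 1 (by simp)
        simpa using h
      have hWI : N (star (b + Complex.I • star a) * (b + Complex.I • star a)) ≤ 4 * r₀ :=
        hW Complex.I (by simp)
      have hWm1 : N (star (b - star a) * (b - star a)) ≤ 4 * r₀ := by
        have h := hW (-1) (by simp)
        simpa [sub_eq_add_neg] using h
      have hWmI : N (star (b - Complex.I • star a) * (b - Complex.I • star a)) ≤ 4 * r₀ := by
        have h := hW (-Complex.I) (by simp)
        simpa [sub_eq_add_neg] using h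
      have hab : star (star a) * b = a * b := by rw [star_star]
      have h4 : (4:ℝ≥0∞) * N (a * b) ≤ 16 * r₀ := by
        have hn4 : ((‖(4:ℂ)‖₊ : ℝ≥0∞)) = 4 := by
          norm_num
        calc (4:ℝ≥0∞) * N (a * b)
            = (‖(4:ℂ)‖₊ : ℝ≥0∞) * N (star (star a) * b) := by rw [hn4, hab]
          _ = N ((4:ℂ) • (star (star a) * b)) := (hsmul _ _).symm
          _ = N ((star (b + star a) * (b + star a))
              + Complex.I • (star (b + Complex.I • star a) * (b + Complex.I • star a))
              - (star (b - star a) * (b - star a))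
              - Complex.I • (star (b - Complex.I • star a) * (b - Complex.I • star a))) := by
              rw [polar4 b (star a)]
          _ ≤ N ((star (b + star a) * (b + star a))
              + Complex.I • (star (b + Complex.I • star a) * (b + Complex.I • star a))
              - (star (b - star a) * (b - star a)))
              + N (-(Complex.I • (star (b - Complex.I • star a) * (b - Complex.I • star a)))) := by
              rw [sub_eq_add_neg]; exact hadd _ _
          _ ≤ (N ((star (b + star a) * (b + star a))
              + Complex.I • (star (b + Complex.I • star a) * (b + Complex.I • star a)))
              + N (-(star (b - star a) * (b - star a))))
              + N (-(Complex.I • (star (b - Complex.I • star a) * (b - Complex.I • star a)))) := by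
              gcongr
              rw [sub_eq_add_neg]; exact hadd _ _
          _ ≤ ((N (star (b + star a) * (b + star a))
              + N (Complex.I • (star (b + Complex.I • star a) * (b + Complex.I • star a))))
              + N (-(star (b - star a) * (b - star a))))
              + N (-(Complex.I • (star (b - Complex.I • star a) * (b - Complex.I • star a)))) := by
              gcongr
              exact hadd _ _
          _ = N (star (b + star a) * (b + star a))
              + N (star (b + Complex.I • star a) * (b + Complex.I • star a))
              + N (star (b - star a) * (b - star a))
              + N (star (b - Complex.I • star a) * (b - Complex.I • star a)) := by
              rw [hNneg, hNneg, hsmul, hsmul]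
              simp
          _ ≤ 4 * r₀ + 4 * r₀ + 4 * r₀ + 4 * r₀ := by
              gcongr
          _ = 16 * r₀ := by ring
      have h4' : (4:ℝ≥0∞) * N (a * b) ≤ 4 * (4 * r₀) := by
        calc (4:ℝ≥0∞) * N (a * b) ≤ 16 * r₀ := h4
          _ = 4 * (4 * r₀) := by ring
      exact (ENNReal.mul_le_mul_iff_right (by norm_num) (by norm_num)).mp h4'
    -- Step 4: general products by scaling.
    have keyP : ∀ (a b : A) (s t : ℝ≥0), 0 < s → 0 < t → N a ≤ s → N b ≤ t →
        N (a * b) ≤ (4 * (r₀:ℝ≥0∞)) * s * t := by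
      intro a b s t hs ht ha hb
      have hsne : (s : ℝ≥0∞) ≠ 0 := by exact_mod_cast hs.ne'
      have hstop : (s : ℝ≥0∞) ≠ ⊤ := ENNReal.coe_ne_top
      have htne : (t : ℝ≥0∞) ≠ 0 := by exact_mod_cast ht.ne'
      have httop : (t : ℝ≥0∞) ≠ ⊤ := ENNReal.coe_ne_top
      set cs : ℂ := (((s:ℝ) : ℂ))⁻¹ with hcs
      set ct : ℂ := (((t:ℝ) : ℂ))⁻¹ with hct
      have hcsn : (‖cs‖₊ : ℝ≥0∞) = (s : ℝ≥0∞)⁻¹ := by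
        rw [hcs]; push_cast [nnnorm_inv]
        simp [ENNReal.coe_inv hs.ne']
      have hctn : (‖ct‖₊ : ℝ≥0∞) = (t : ℝ≥0∞)⁻¹ := by
        rw [hct]; push_cast [nnnorm_inv]
        simp [ENNReal.coe_inv ht.ne']
      have ha' : N (cs • a) ≤ 1 := by
        rw [hsmul, hcsn]
        calc (s : ℝ≥0∞)⁻¹ * N a ≤ (s : ℝ≥0∞)⁻¹ * s := by gcongr
          _ = 1 := ENNReal.inv_mul_cancel hsne hstop
      have hb' : N (ct • b) ≤ 1 := by
        rw [hsmul, hctn]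
        calc (t : ℝ≥0∞)⁻¹ * N b ≤ (t : ℝ≥0∞)⁻¹ * t := by gcongr
          _ = 1 := ENNReal.inv_mul_cancel htne httop
      have hk := key3 _ _ ha' hb'
      rw [smul_mul_smul_comm, hsmul, nnnorm_mul, ENNReal.coe_mul, hcsn, hctn] at hk
      have hone : ((s:ℝ≥0∞) * t) * ((s:ℝ≥0∞)⁻¹ * (t:ℝ≥0∞)⁻¹) = 1 := by
        rw [mul_mul_mul_comm, ENNReal.mul_inv_cancel hsne hstop,
          ENNReal.mul_inv_cancel htne httop, one_mul]
      calc N (a * b)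
          = ((s:ℝ≥0∞) * t) * (((s:ℝ≥0∞)⁻¹ * (t:ℝ≥0∞)⁻¹) * N (a * b)) := by
            rw [← mul_assoc, hone, one_mul]
        _ ≤ ((s:ℝ≥0∞) * t) * (4 * r₀) := by gcongr
        _ = (4 * (r₀:ℝ≥0∞)) * s * t := by ring
    -- Conclusion.
    have hCne : (4 * (r₀:ℝ≥0∞) + 1) ≠ 0 := by
      intro h
      rcases add_eq_zero.mp h with ⟨-, h1⟩
      exact one_ne_zero h1
    refine ⟨4 * r₀ + 1, lt_of_lt_of_le zero_lt_one le_add_self, ?_⟩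
    intro a b
    push_cast
    rcases eq_or_ne (N a) 0 with ha0 | ha0
    · rw [hdef a ha0, zero_mul, hN0]
      exact zero_le
    rcases eq_or_ne (N b) 0 with hb0 | hb0
    · rw [hdef b hb0, mul_zero, hN0]
      exact zero_le
    rcases eq_or_ne (N a) ⊤ with hat | hat
    · rw [hat, ENNReal.mul_top hCne, ENNReal.top_mul hb0]
      exact le_top
    rcases eq_or_ne (N b) ⊤ with hbt | hbt
    · rw [hbt, ENNReal.mul_top (mul_ne_zero hCne ha0)]
      exact le_top
    set s : ℝ≥0 := (N a).toNNReal with hs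
    set t : ℝ≥0 := (N b).toNNReal with ht
    have hsa : (s : ℝ≥0∞) = N a := ENNReal.coe_toNNReal hat
    have hta : (t : ℝ≥0∞) = N b := ENNReal.coe_toNNReal hbt
    have hspos : 0 < s := by
      rw [pos_iff_ne_zero]
      intro h
      exact ha0 (by rw [← hsa, h, ENNReal.coe_zero])
    have htpos : 0 < t := by
      rw [pos_iff_ne_zero]
      intro h
      exact hb0 (by rw [← hta, h, ENNReal.coe_zero])
    calc N (a * b) ≤ (4 * (r₀:ℝ≥0∞)) * s * t := keyP a b s t hspos htpos hsa.ge hta.ge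
      _ = (4 * (r₀:ℝ≥0∞)) * ((s : ℝ≥0∞) * t) := by ring
      _ = (4 * (r₀:ℝ≥0∞)) * (N a * N b) := by rw [hsa, hta]
      _ ≤ (4 * (r₀:ℝ≥0∞) + 1) * (N a * N b) := by gcongr; exact le_self_add
      _ = (4 * (r₀:ℝ≥0∞) + 1) * N a * N b := by ring
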